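/- A finite group G has a regular row transversal if and only if 1 ∈ P(G), i.e., there is an ordering g₁, …, g_n of all elements of G with g₁⋯g_n = 1. -/

import Mathlib

private lemma mapSub {α β : Type*} [DecidableEq α] [DecidableEq β] (f : α → β)
    {s t : Multiset α} (h : s ≤ t) : (t - s).map f = t.map f - s.map f := by
  ext b
  rw [Multiset.count_map, Multiset.count_sub, Multiset.count_map, Multiset.count_map,
      Multiset.filter_sub, Multiset.card_sub (Multiset.filter_le_filter _ h)]

private lemma countfilter {α β : Type*} [DecidableEq β] (s : Multiset α) (f : α → β) (g : β) :
    Multiset.card (s.filter (fun t => f t = g)) = Multiset.count g (s.map f) := by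
  rw [Multiset.count_map]
  congr 1
  exact Multiset.filter_congr (fun x _ => eq_comm)

private lemma keyLemma {G : Type*} [Group G] [Fintype G] [DecidableEq G] (f : G → G) :
    ∀ (n : ℕ) (m : Multiset G), Multiset.card m = n →
      m.map f = m.map (fun r => r * f r) →
      ∃ l : List G, (↑l : Multiset G) = m ∧ l.prod = 1 := by
  intro n
  induction n using Nat.strong_induction_on with
  | _ n IH =>
    intro m hcard hmap
    rcases Multiset.empty_or_exists_mem m with hm | ⟨x₀, hx₀⟩
    · exact ⟨[], by simp [hm], rfl⟩
    have hstep : ∀ x ∈ m, ∃ b, b ∈ m ∧ f b = x * f x := by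
      intro x hx
      have hx' : x * f x ∈ m.map f := by
        rw [hmap]; exact Multiset.mem_map_of_mem _ hx
      rcases Multiset.mem_map.1 hx' with ⟨b, hb, hfb⟩
      exact ⟨b, hb, hfb⟩
    choose step hstepmem hstepval using hstep
    let A : ℕ → {x : G // x ∈ m} := fun n =>
      Nat.rec ⟨x₀, hx₀⟩ (fun _ p => ⟨step p.1 p.2, hstepmem p.1 p.2⟩) n
    let a : ℕ → G := fun n => (A n).1
    have ha : ∀ n, a n ∈ m := fun n => (A n).2
    have hrec : ∀ n, f (a (n + 1)) = a n * f (a n) := fun n => hstepval (A n).1 (A n).2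
    classical
    have hQ : ∃ nn, ∃ i < nn, a i = a nn := by
      obtain ⟨p, q, hpq, hapq⟩ := Finite.exists_ne_map_eq_of_infinite a
      rcases Nat.lt_or_ge p q with h | h
      · exact ⟨q, p, h, hapq⟩
      · exact ⟨p, q, lt_of_le_of_ne h (Ne.symm hpq), hapq.symm⟩
    obtain ⟨i, hij, heq⟩ := Nat.find_spec hQ
    set j := Nat.find hQ with hj_def
    have hmin : ∀ p, p < j → ¬ ∃ i < p, a i = a p := fun p hp => Nat.find_min hQ hp
    set k := j - i with hk_def
    have hik : i + k = j := by omega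
    have hkpos : 0 < k := by omega
    have hprod : ∀ t, f (a (i + t)) =
        (((List.range t).map (fun s => a (i + s))).reverse).prod * f (a i) := by
      intro t
      induction t with
      | zero => simp
      | succ t iht =>
        have h1 : i + (t + 1) = (i + t) + 1 := rfl
        rw [h1, hrec (i + t), iht, List.range_succ, List.map_append, List.reverse_append]
        simp [mul_assoc]
    set L : List G := ((List.range k).map (fun t => a (i + t))).reverse with hL
    have hLprod : L.prod = 1 := by
      have h1 := hprod k
      rw [hik, ← heq] at h1
      have h2 : L.prod * f (a i) = 1 * f (a i) := by rw [one_mul]; exact h1.symm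
      exact mul_right_cancel h2
    have hinjon : ∀ p q, p < j → q < j → a p = a q → p = q := by
      intro p q hp hq hpq
      by_contra hne
      rcases Nat.lt_or_ge p q with h | h
      · exact hmin q hq ⟨p, h, hpq⟩
      · exact hmin p hp ⟨q, lt_of_le_of_ne h (fun e => hne e.symm), hpq.symm⟩
    have hLnodup : L.Nodup := by
      rw [hL, List.nodup_reverse]
      apply List.Nodup.map_on _ (List.nodup_range : (List.range k).Nodup)
      intro x hx y hy hxy
      have hx' : x < k := List.mem_range.1 hx
      have hy' : y < k := List.mem_range.1 hy
      have := hinjon (i + x) (i + y) (by omega) (by omega) hxy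
      omega
    have hLmem : ∀ x ∈ L, x ∈ m := by
      intro x hx
      rw [hL, List.mem_reverse, List.mem_map] at hx
      rcases hx with ⟨t, _, rfl⟩
      exact ha _
    have hLle : (↑L : Multiset G) ≤ m := by
      rw [Multiset.le_iff_count]
      intro x
      by_cases hx : x ∈ L
      · have h1 : List.count x L ≤ 1 := List.nodup_iff_count_le_one.1 hLnodup x
        have h2 : 1 ≤ Multiset.count x m := Multiset.one_le_count_iff_mem.2 (hLmem x hx)
        rw [Multiset.coe_count]
        omega
      · rw [Multiset.coe_count, List.count_eq_zero_of_not_mem hx]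
        exact Nat.zero_le _
    -- map condition on L
    have key2 : L.map f = ((List.range k).map (fun t => f (a (i + t)))).reverse := by
      rw [hL, List.map_reverse, List.map_map]
      rfl
    have key1 : L.map (fun r => r * f r) =
        ((List.range k).map (fun t => f (a (i + t + 1)))).reverse := by
      rw [hL, List.map_reverse, List.map_map]
      congr 1
      apply List.map_congr_left
      intro t _
      exact (hrec (i + t)).symm
    have hp12 : ((List.range k).map (fun t => f (a (i + t + 1)))).Perm
        ((List.range k).map (fun t => f (a (i + t)))) := by
      obtain ⟨k', hk'⟩ : ∃ k', k = k' + 1 := ⟨k - 1, by omega⟩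
      have e1 : (List.range (k' + 1)).map (fun t => f (a (i + t + 1))) =
          ((List.range k').map (fun t => f (a (i + t + 1)))) ++ [f (a (i + k' + 1))] := by
        rw [List.range_succ, List.map_append]
        rfl
      have e2 : (List.range (k' + 1)).map (fun t => f (a (i + t))) =
          f (a i) :: ((List.range k').map (fun t => f (a (i + t + 1)))) := by
        rw [List.range_succ_eq_map, List.map_cons, List.map_map]
        rfl
      have e3 : f (a (i + k' + 1)) = f (a i) := by
        have hji : i + k' + 1 = j := by omega
        rw [hji, ← heq]
      rw [hk', e1, e2, e3]
      exact List.perm_append_comm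
    have hLmap : (↑L : Multiset G).map f = (↑L : Multiset G).map (fun r => r * f r) := by
      have hperm : (L.map f).Perm (L.map (fun r => r * f r)) := by
        rw [key1, key2]
        exact ((List.reverse_perm _).trans hp12.symm).trans (List.reverse_perm _).symm
      exact Multiset.coe_eq_coe.2 hperm
    have hmap' : (m - (L : Multiset G)).map f = (m - (L : Multiset G)).map (fun r => r * f r) := by
      rw [mapSub f hLle, mapSub (fun r => r * f r) hLle, hmap, hLmap]
    have hLcard : Multiset.card (↑L : Multiset G) = k := by
      simp [hL]
    have hcard' : Multiset.card (m - (L : Multiset G)) < n := by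
      have hle := Multiset.card_le_card hLle
      rw [Multiset.card_sub hLle]
      omega
    obtain ⟨l', hl'm, hl'p⟩ := IH _ hcard' (m - (L : Multiset G)) rfl hmap'
    refine ⟨L ++ l', ?_, by simp [hLprod, hl'p]⟩
    have : ((L ++ l' : List G) : Multiset G) = (↑L : Multiset G) + ↑l' := by
      simp
    rw [this, hl'm, add_comm]
    exact tsub_add_cancel_of_le hLle


private def cellsAux {G : Type*} [Group G] : G → List G → List (G × G × G)
  | _, [] => []
  | p, x :: xs => (x, (p * x)⁻¹, p⁻¹) :: cellsAux (p * x) xs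

private lemma cellsAux_fst {G : Type*} [Group G] :
    ∀ (p : G) (l : List G), (cellsAux p l).map Prod.fst = l := by
  intro p l
  induction l generalizing p with
  | nil => rfl
  | cons x xs ih => simp [cellsAux, ih]

private lemma cellsAux_entry {G : Type*} [Group G] :
    ∀ (p : G) (l : List G), ∀ t ∈ cellsAux p l, t.2.2 = t.1 * t.2.1 := by
  intro p l
  induction l generalizing p with
  | nil => intro t ht; simp [cellsAux] at ht
  | cons x xs ih =>
    intro t ht
    rcases List.mem_cons.1 ht with rfl | h
    · simp [mul_inv_rev, ← mul_assoc]
    · exact ih (p * x) t h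

private lemma cellsAux_col_entry {G : Type*} [Group G] :
    ∀ (p : G) (l : List G),
      (cellsAux p l).map (fun t => t.2.2) ++ [(p * l.prod)⁻¹] =
      p⁻¹ :: (cellsAux p l).map (fun t => t.2.1) := by
  intro p l
  induction l generalizing p with
  | nil => simp [cellsAux]
  | cons x xs ih =>
    have h := ih (p * x)
    simp only [cellsAux, List.map_cons, List.cons_append, List.prod_cons]
    rw [← mul_assoc, h]

/-- A regular row transversal of the multiplication table of `G`: one cell
from each row, such that each element of `G` occurs as a column (second
coordinate) exactly as often as it occurs as an entry (third coordinate). -/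
def IsRegRowTransversal (G : Type*) [Group G] [DecidableEq G]
    (C : Finset (G × G × G)) : Prop :=
  (∀ t ∈ C, t.2.2 = t.1 * t.2.1) ∧
  (∀ g : G, (C.filter fun t => t.1 = g).card = 1) ∧
  (∀ g : G, (C.filter fun t => t.2.1 = g).card = (C.filter fun t => t.2.2 = g).card)

theorem regRowTransversal_iff_one_full_product (G : Type*) [Group G] [Fintype G]
    [DecidableEq G] :
    (∃ C : Finset (G × G × G), IsRegRowTransversal G C) ↔
    (∃ l : List G, (↑l : Multiset G) = (Finset.univ : Finset G).val ∧ l.prod = 1) := by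
  constructor
  · rintro ⟨C, hC1, hC2, hC3⟩
    have hex : ∀ g : G, ∃ t, C.filter (fun t => t.1 = g) = {t} :=
      fun g => Finset.card_eq_one.1 (hC2 g)
    choose cell hcell using hex
    set f : G → G := fun g => (cell g).2.1 with hf
    have hcellmem : ∀ g, cell g ∈ C ∧ (cell g).1 = g := by
      intro g
      have hmem : cell g ∈ C.filter (fun t => t.1 = g) := by
        rw [hcell g]; exact Finset.mem_singleton_self _
      exact ⟨(Finset.mem_filter.1 hmem).1, (Finset.mem_filter.1 hmem).2⟩
    have hcell22 : ∀ g, (cell g).2.2 = g * f g := by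
      intro g
      have h := hC1 _ (hcellmem g).1
      rw [h, (hcellmem g).2]
    have hCeq : ∀ t ∈ C, t = (t.1, f t.1, t.1 * f t.1) := by
      intro t ht
      have htf : t ∈ C.filter (fun s => s.1 = t.1) := Finset.mem_filter.2 ⟨ht, rfl⟩
      rw [hcell t.1] at htf
      have ht1 : t = cell t.1 := Finset.mem_singleton.1 htf
      have h1 : (cell t.1).1 = t.1 := (hcellmem t.1).2
      have h2 : (cell t.1).2.2 = t.1 * f t.1 := hcell22 t.1
      have h3 : (t.1, f t.1, t.1 * f t.1) = cell t.1 :=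
        Prod.ext_iff.2 ⟨h1.symm, Prod.ext_iff.2 ⟨rfl, h2.symm⟩⟩
      exact ht1.trans h3.symm
    have hinj : Function.Injective (fun g : G => (g, f g, g * f g)) := by
      intro a b h
      exact congrArg (fun t : G × G × G => t.1) h
    have hCmap : C = Finset.univ.map ⟨fun g => (g, f g, g * f g), hinj⟩ := by
      ext t
      simp only [Finset.mem_map, Finset.mem_univ, true_and, Function.Embedding.coeFn_mk]
      constructor
      · intro ht; exact ⟨t.1, (hCeq t ht).symm⟩
      · rintro ⟨g, rfl⟩
        have hm := (hcellmem g).1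
        have h := hCeq _ hm
        rw [(hcellmem g).2] at h
        rw [← h]
        exact hm
    have hcnt : ∀ (h : G × G × G → G) (g : G),
        (C.filter fun t => h t = g).card =
          Multiset.count g (Finset.univ.val.map (fun x : G => h (x, f x, x * f x))) := by
      intro h g
      have h1 : (C.filter fun t => h t = g).card =
          Multiset.card ((C.val).filter (fun t => h t = g)) := rfl
      rw [h1, hCmap, Finset.map_val, countfilter, Multiset.map_map]
      rfl
    have hmul : Finset.univ.val.map f = Finset.univ.val.map (fun r => r * f r) := by
      apply Multiset.ext.2
      intro g
      have h := hC3 g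
      rw [hcnt (fun t => t.2.1) g, hcnt (fun t => t.2.2) g] at h
      exact h
    exact keyLemma f (Multiset.card Finset.univ.val) Finset.univ.val rfl hmul
  · rintro ⟨l, hl, hp⟩
    have hlnodup : l.Nodup := by
      have := Finset.univ.nodup (α := G)
      rw [← hl] at this
      exact this
    have hcellsnodup : (cellsAux 1 l).Nodup := by
      apply List.Nodup.of_map Prod.fst
      rw [cellsAux_fst]
      exact hlnodup
    refine ⟨⟨(↑(cellsAux 1 l) : Multiset (G × G × G)), Multiset.coe_nodup.2 hcellsnodup⟩,
      ?_, ?_, ?_⟩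
    · intro t ht
      exact cellsAux_entry 1 l t ht
    · intro g
      have h1 : ((⟨(↑(cellsAux 1 l) : Multiset (G × G × G)), Multiset.coe_nodup.2 hcellsnodup⟩ :
          Finset (G × G × G)).filter fun t => t.1 = g).card =
          Multiset.card ((↑(cellsAux 1 l) : Multiset (G × G × G)).filter (fun t => t.1 = g)) := rfl
      rw [h1, countfilter _ Prod.fst g]
      have h2 : ((↑(cellsAux 1 l) : Multiset (G × G × G)).map Prod.fst) = (↑l : Multiset G) := by
        rw [Multiset.map_coe, cellsAux_fst]
      rw [h2, Multiset.coe_count]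
      apply List.count_eq_one_of_mem hlnodup
      have : g ∈ (Finset.univ : Finset G).val := Finset.mem_univ_val g
      rw [← hl] at this
      exact this
    · intro g
      have hperm : ((cellsAux 1 l).map (fun t => t.2.1)).Perm
          ((cellsAux 1 l).map (fun t => t.2.2)) := by
        have h := cellsAux_col_entry 1 l
        rw [hp] at h
        simp only [mul_one, inv_one] at h
        have hperm1 : ((1 : G) :: (cellsAux 1 l).map (fun t => t.2.1)).Perm
            ((1 : G) :: (cellsAux 1 l).map (fun t => t.2.2)) := by
          rw [← h]
          exact List.perm_append_comm
        exact hperm1.cons_inv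
      have h1 : ((⟨(↑(cellsAux 1 l) : Multiset (G × G × G)), Multiset.coe_nodup.2 hcellsnodup⟩ :
          Finset (G × G × G)).filter fun t => t.2.1 = g).card =
          Multiset.card ((↑(cellsAux 1 l) : Multiset (G × G × G)).filter
            (fun t => t.2.1 = g)) := rfl
      have h2 : ((⟨(↑(cellsAux 1 l) : Multiset (G × G × G)), Multiset.coe_nodup.2 hcellsnodup⟩ :
          Finset (G × G × G)).filter fun t => t.2.2 = g).card =
          Multiset.card ((↑(cellsAux 1 l) : Multiset (G × G × G)).filter
            (fun t => t.2.2 = g)) := rfl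
      rw [h1, h2,
        countfilter (↑(cellsAux 1 l) : Multiset (G × G × G)) (fun t => t.2.1) g,
        countfilter (↑(cellsAux 1 l) : Multiset (G × G × G)) (fun t => t.2.2) g,
        Multiset.map_coe, Multiset.map_coe, Multiset.coe_count, Multiset.coe_count]
      exact hperm.count_eq g
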